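/- Suppose K : X → H has Fréchet derivative K'(u) that is Lipschitz continuous with constant L on X, and u†, w, μ† satisfy the source condition K'(u†)* w = u† − μ† with ⟨μ†, u − u†⟩ ≥ 0 for all u ∈ C, and L‖w‖ < 1. Then the nonlinearity condition holds with ε = 1 − L‖w‖ and c_r = 0: for all u ∈ C, ½‖u − u†‖² − ⟨w, E(u,u†)⟩ + ⟨μ†, u − u†⟩ ≥ ((1 − L‖w‖)/2)‖u − u†‖². -/

import Mathlib

open scoped RealInnerProductSpace

/-- The classical nonlinearity condition (Lipschitz derivative with `L‖w‖ < 1`)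
implies the proposed nonlinearity condition with `ε = 1 - L‖w‖`, `c_r = 0`. -/

lemma taylor_remainder_bound
    {X H : Type*} [NormedAddCommGroup X] [NormedSpace ℝ X]
    [NormedAddCommGroup H] [NormedSpace ℝ H]
    (K : X → H) (DK : X → X →L[ℝ] H) (hK : ∀ x, HasFDerivAt K (DK x) x)
    (L : ℝ) (hLip : ∀ u v : X, ‖DK u - DK v‖ ≤ L * ‖u - v‖)
    (u v : X) :
    ‖K u - K v - DK v (u - v)‖ ≤ L / 2 * ‖u - v‖ ^ 2 := by
  set d := u - v with hd
  set f : ℝ → H := fun t => K (v + t • d) - K v - t • (DK v d) with hf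
  set f' : ℝ → H := fun t => DK (v + t • d) d - DK v d with hf'
  have hderiv : ∀ t : ℝ, HasDerivAt f (f' t) t := by
    intro t
    have hγ : HasDerivAt (fun t : ℝ => v + t • d) d t := by
      simpa using ((hasDerivAt_id t).smul_const d).const_add v
    have h1 : HasDerivAt (fun t : ℝ => K (v + t • d)) (DK (v + t • d) d) t :=
      (hK (v + t • d)).comp_hasDerivAt t hγ
    have h2 : HasDerivAt (fun t : ℝ => t • (DK v d)) (DK v d) t := by
      simpa using (hasDerivAt_id t).smul_const (DK v d)
    exact (h1.sub_const (K v)).sub h2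
  set B : ℝ → ℝ := fun t => L * ‖d‖ ^ 2 * (t ^ 2 / 2) with hB
  set B' : ℝ → ℝ := fun t => L * ‖d‖ ^ 2 * t with hB'
  have hbound : ∀ t ∈ Set.Ico (0:ℝ) 1, ‖f' t‖ ≤ B' t := by
    intro t ht
    have h1 : ‖f' t‖ ≤ ‖DK (v + t • d) - DK v‖ * ‖d‖ := by
      simpa [hf'] using (DK (v + t • d) - DK v).le_opNorm d
    have h2 : ‖DK (v + t • d) - DK v‖ ≤ L * (t * ‖d‖) := by
      have := hLip (v + t • d) v
      simpa [norm_smul, abs_of_nonneg ht.1] using this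
    calc ‖f' t‖ ≤ L * (t * ‖d‖) * ‖d‖ :=
          h1.trans (mul_le_mul_of_nonneg_right h2 (norm_nonneg d))
      _ = B' t := by ring
  have key : ∀ t ∈ Set.Icc (0:ℝ) 1, ‖f t‖ ≤ B t := by
    have hBd : ∀ t : ℝ, HasDerivAt B (B' t) t := by
      intro t
      have h : HasDerivAt (fun t : ℝ => t ^ 2 / 2) t t := by
        simpa using ((hasDerivAt_pow 2 t).div_const 2)
      simpa [hB, hB', mul_comm] using h.const_mul (L * ‖d‖ ^ 2)
    exact fun t ht => image_norm_le_of_norm_deriv_right_le_deriv_boundary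
      (fun t _ => (hderiv t).continuousAt.continuousWithinAt)
      (fun t _ => (hderiv t).hasDerivWithinAt)
      (by simp [hf, hB]) hBd hbound ht
  have := key 1 (by norm_num)
  have h2 : ‖K u - K v - DK v (u - v)‖ ≤ L * ‖u - v‖ ^ 2 / 2 := by
    simpa [hf, hB, hd, div_eq_mul_inv] using this
  linarith

theorem classical_implies_new_nonlinearity
    {X H : Type*} [NormedAddCommGroup X] [InnerProductSpace ℝ X] [CompleteSpace X]
    [NormedAddCommGroup H] [InnerProductSpace ℝ H] [CompleteSpace H]
    (K : X → H) (DK : X → X →L[ℝ] H) (hK : ∀ x, HasFDerivAt K (DK x) x)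
    (L : ℝ) (hLip : ∀ u v : X, ‖DK u - DK v‖ ≤ L * ‖u - v‖)
    (C : Set X) (hCconv : Convex ℝ C)
    (udag : X) (hudag : udag ∈ C) (w : H) (μdag : X)
    (hsrc : (DK udag).adjoint w = udag - μdag)
    (hμ : ∀ u ∈ C, 0 ≤ ⟪μdag, u - udag⟫)
    (hsmall : L * ‖w‖ < 1)
    (E : X → X → H) (hE : ∀ u v, E u v = K u - K v - DK v (u - v)) :
    ∀ u ∈ C,
      ((1 - L * ‖w‖) / 2) * ‖u - udag‖^2 ≤
        (1/2) * ‖u - udag‖^2 - ⟪w, E u udag⟫ + ⟪μdag, u - udag⟫ := by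
  intro u hu
  have hEb : ‖E u udag‖ ≤ L / 2 * ‖u - udag‖ ^ 2 := by
    rw [hE]; exact taylor_remainder_bound K DK hK L hLip u udag
  have hin : ⟪w, E u udag⟫ ≤ ‖w‖ * (L / 2 * ‖u - udag‖ ^ 2) :=
    (real_inner_le_norm w (E u udag)).trans
      (mul_le_mul_of_nonneg_left hEb (norm_nonneg w))
  have hμ' := hμ u hu
  nlinarith [hin, hμ']
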